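/- Let p ≥ 1 be an integer, β ∈ (0,1], L ≥ 0, and let f ∈ C^{p,β}(ℝ^n) with constant L. Let x, s ∈ ℝ^n with s ≠ 0, let σ > 0, η₂ ∈ (0,1) with σ ≥ (L+3)/(1−η₂), let ω ≥ 0 with ω ≤ 1/σ, and let f̄_x, f̄_{xs}, Δ̄T be real numbers satisfying: Δ̄T > (σ/(p+β)!) ‖s‖^{p+β}, |f̄_x − f(x)| ≤ ω·Δ̄T, |f̄_{xs} − f(x+s)| ≤ ω·Δ̄T, and |Δ̄T − (f(x) − T_p^f(x,s))| ≤ ω·Δ̄T. Then the ratio ρ := (f̄_x − f̄_{xs})/Δ̄T satisfies |ρ − 1| ≤ 1 − η₂, and in particular ρ ≥ η₂. -/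

import Mathlib

open scoped BigOperators

/-- Generalized factorial: `(i+β)! := ∏_{ℓ=1}^i (ℓ+β)` (empty product = 1). -/
noncomputable def hfact (β : ℝ) (i : ℕ) : ℝ := ∏ ℓ ∈ Finset.Icc 1 i, ((ℓ : ℝ) + β)

/-- The `p`-th order Taylor polynomial of `f` at `x`, evaluated at `s`. -/
noncomputable def taylorP {n : ℕ} (f : EuclideanSpace ℝ (Fin n) → ℝ) (p : ℕ)
    (x s : EuclideanSpace ℝ (Fin n)) : ℝ :=
  ∑ ℓ ∈ Finset.range (p + 1),
    (1 / (ℓ.factorial : ℝ)) * iteratedFDeriv ℝ ℓ f x (fun _ => s)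

lemma hfact_succ (β : ℝ) (p : ℕ) : hfact β (p+1) = hfact β p * ((p:ℝ) + 1 + β) := by
  rw [hfact, hfact, Finset.prod_Icc_succ_top (Nat.le_add_left 1 p)]
  push_cast; ring

lemma hfact_pos {β : ℝ} (hβ : 0 < β) (p : ℕ) : 0 < hfact β p := by
  apply Finset.prod_pos
  intro ℓ hℓ
  positivity

lemma iteratedFDeriv_shift {E F : Type*} [NormedAddCommGroup E] [NormedSpace ℝ E]
    [NormedAddCommGroup F] [NormedSpace ℝ F] (f : E → F) (p : ℕ) (hf : ContDiff ℝ p f)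
    (c : E) : ∀ i ≤ p, ∀ y, iteratedFDeriv ℝ i (fun z => f (c + z)) y = iteratedFDeriv ℝ i f (c + y) := by
  intro i hi
  induction i with
  | zero => intro y; ext m; simp [iteratedFDeriv_zero_apply]
  | succ k IH =>
    intro y
    have hk : k ≤ p := le_of_lt (Nat.lt_of_succ_le hi)
    rw [iteratedFDeriv_succ_eq_comp_left, iteratedFDeriv_succ_eq_comp_left]
    simp only [Function.comp_apply]
    congr 1
    have hdiff : DifferentiableAt ℝ (iteratedFDeriv ℝ k f) (c + y) :=
      hf.differentiable_iteratedFDeriv (by exact_mod_cast Nat.lt_of_succ_le hi) (c + y)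
    rw [show (iteratedFDeriv ℝ k fun z => f (c + z)) = fun z => iteratedFDeriv ℝ k f (c + z)
        from funext (IH hk)]
    have h2 : (fun z => iteratedFDeriv ℝ k f (c + z)) = (iteratedFDeriv ℝ k f) ∘ (fun z => c + z) := rfl
    rw [h2, fderiv_comp y hdiff (differentiableAt_id.const_add c)]
    have h3 : fderiv ℝ (fun z : E => c + z) y = ContinuousLinearMap.id ℝ E := by
      rw [fderiv_const_add]; exact fderiv_id
    rw [h3, ContinuousLinearMap.comp_id]

lemma iteratedDeriv_line {E : Type*} [NormedAddCommGroup E] [NormedSpace ℝ E]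
    (f : E → ℝ) (p : ℕ) (hf : ContDiff ℝ p f) (x s : E) (i : ℕ) (hi : i ≤ p) (t : ℝ) :
    iteratedDeriv i (fun u : ℝ => f (x + u • s)) t
      = iteratedFDeriv ℝ i f (x + t • s) (fun _ => s) := by
  have hh : ContDiff ℝ p (fun z => f (x + z)) := hf.comp (contDiff_const.add contDiff_id)
  set A : ℝ →L[ℝ] E := (ContinuousLinearMap.id ℝ ℝ).smulRight s with hA
  have hcomp : (fun u : ℝ => f (x + u • s)) = (fun z => f (x + z)) ∘ A := by
    funext u; simp [hA]
  rw [iteratedDeriv, hcomp, ContinuousLinearMap.iteratedFDeriv_comp_right A hh t (by exact_mod_cast hi)]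
  rw [ContinuousMultilinearMap.compContinuousLinearMap_apply]
  rw [iteratedFDeriv_shift f p hf x i hi (A t)]
  simp [hA]

lemma key1d (β : ℝ) (hβ0 : 0 < β) :
    ∀ p : ℕ, ∀ g : ℝ → ℝ, ∀ C : ℝ, 0 ≤ C → ContDiff ℝ p g →
    (∀ t ∈ Set.Icc (0:ℝ) 1, |iteratedDeriv p g t - iteratedDeriv p g 0| ≤ C * t ^ β) →
    ∀ u ∈ Set.Icc (0:ℝ) 1,
      |g u - ∑ ℓ ∈ Finset.range (p+1), iteratedDeriv ℓ g 0 * u ^ ℓ / (ℓ.factorial : ℝ)|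
        ≤ C * u ^ ((p:ℝ) + β) / hfact β p := by
  intro p
  induction p with
  | zero =>
    intro g C hC hg hHol u hu
    have h1 : hfact β 0 = 1 := by simp [hfact]
    rw [h1]
    simpa using hHol u hu
  | succ p IH =>
    intro g C hC hg hHol u hu
    have hg1 : ContDiff ℝ ((p:ℕ∞) + 1) g := by exact_mod_cast hg
    have hg' : ContDiff ℝ p (deriv g) := (contDiff_succ_iff_deriv.mp hg1).2.2
    have hHol' : ∀ t ∈ Set.Icc (0:ℝ) 1,
        |iteratedDeriv p (deriv g) t - iteratedDeriv p (deriv g) 0| ≤ C * t ^ β := by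
      intro t ht
      rw [← iteratedDeriv_succ']
      exact hHol t ht
    have hIH := IH (deriv g) C hC hg' hHol'
    set c : ℕ → ℝ := fun ℓ => iteratedDeriv ℓ g 0 with hc
    set F : ℝ → ℝ := fun v => g v - ∑ ℓ ∈ Finset.range (p+2), c ℓ * v ^ ℓ / (ℓ.factorial : ℝ) with hF
    set F' : ℝ → ℝ := fun v => deriv g v - ∑ ℓ ∈ Finset.range (p+1),
      iteratedDeriv ℓ (deriv g) 0 * v ^ ℓ / (ℓ.factorial : ℝ) with hF'
    have hgdiff : Differentiable ℝ g := hg1.differentiable (by norm_num)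
    have hFderiv : ∀ v : ℝ, HasDerivAt F (F' v) v := by
      intro v
      have h1 : HasDerivAt g (deriv g v) v := (hgdiff v).hasDerivAt
      have h2 : HasDerivAt (fun w => ∑ ℓ ∈ Finset.range (p+2), c ℓ * w ^ ℓ / (ℓ.factorial : ℝ))
          (∑ ℓ ∈ Finset.range (p+2), c ℓ * ((ℓ:ℝ) * v ^ (ℓ - 1)) / (ℓ.factorial : ℝ)) v := by
        apply HasDerivAt.fun_sum
        intro ℓ _
        simpa [div_eq_mul_inv, mul_assoc, mul_comm, mul_left_comm] using
          (((hasDerivAt_pow ℓ v).const_mul (c ℓ)).div_const (ℓ.factorial : ℝ))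
      have h3 : (∑ ℓ ∈ Finset.range (p+2), c ℓ * ((ℓ:ℝ) * v ^ (ℓ - 1)) / (ℓ.factorial : ℝ))
          = ∑ ℓ ∈ Finset.range (p+1), iteratedDeriv ℓ (deriv g) 0 * v ^ ℓ / (ℓ.factorial : ℝ) := by
        rw [Finset.sum_range_succ' (fun ℓ => c ℓ * ((ℓ:ℝ) * v ^ (ℓ - 1)) / (ℓ.factorial : ℝ)) (p+1)]
        simp only [Nat.cast_zero, zero_mul, mul_zero, zero_div, add_zero]
        apply Finset.sum_congr rfl
        intro ℓ _
        rw [← iteratedDeriv_succ']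
        have : ((ℓ+1).factorial : ℝ) = ((ℓ:ℝ) + 1) * (ℓ.factorial : ℝ) := by
          rw [Nat.factorial_succ]; push_cast; ring
        rw [this]
        simp only [hc, Nat.add_sub_cancel, Nat.cast_add, Nat.cast_one]
        have hfacpos : (0:ℝ) < (ℓ.factorial : ℝ) := by positivity
        field_simp
      rw [hF']
      exact (h1.sub (h3 ▸ h2))
    have hu0 : (0:ℝ) ≤ u := hu.1
    have hu1 : u ≤ 1 := hu.2
    have hF'cont : Continuous F' := by
      apply Continuous.sub
      · exact (contDiff_succ_iff_deriv.mp hg1).2.2.continuous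
      · exact continuous_finset_sum _ fun ℓ _ =>
          (continuous_const.mul (continuous_pow ℓ)).div_const _
    have hFTC : F u - F 0 = ∫ v in (0:ℝ)..u, F' v :=
      (intervalIntegral.integral_eq_sub_of_hasDerivAt (fun v _ => hFderiv v)
        (hF'cont.intervalIntegrable 0 u)).symm
    have hF0 : F 0 = 0 := by
      rw [hF]
      simp only
      rw [Finset.sum_range_succ' (fun ℓ => c ℓ * (0:ℝ) ^ ℓ / (ℓ.factorial : ℝ)) (p+1)]
      simp [hc]
    have hbound : ∀ v ∈ Set.Icc (0:ℝ) u, |F' v| ≤ C * v ^ ((p:ℝ) + β) / hfact β p := by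
      intro v hv
      exact hIH v ⟨hv.1, le_trans hv.2 hu1⟩
    have hintle : |∫ v in (0:ℝ)..u, F' v| ≤ ∫ v in (0:ℝ)..u, C * v ^ ((p:ℝ) + β) / hfact β p := by
      have hInt : IntervalIntegrable (fun v : ℝ => C * v ^ ((p:ℝ) + β) / hfact β p)
          MeasureTheory.volume 0 u :=
        ((intervalIntegral.intervalIntegrable_rpow' (by linarith : (-1:ℝ) < (p:ℝ) + β)).const_mul C).div_const _
      have hae : ∀ᵐ v ∂(MeasureTheory.volume.restrict (Set.uIoc (0:ℝ) u)),
          ‖F' v‖ ≤ C * v ^ ((p:ℝ) + β) / hfact β p := by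
        rw [MeasureTheory.ae_restrict_iff' measurableSet_uIoc]
        filter_upwards with v hv
        rw [Set.uIoc_of_le hu0] at hv
        exact hbound v ⟨le_of_lt hv.1, hv.2⟩
      have h1 := intervalIntegral.norm_integral_le_of_norm_le hu0
        (by filter_upwards [(MeasureTheory.ae_restrict_iff' measurableSet_uIoc).mp hae] with v hv hv'
            exact hv (by rwa [Set.uIoc_of_le hu0])) hInt
      rw [Real.norm_eq_abs] at h1
      refine (h1.trans (le_abs_self _)).trans_eq (abs_of_nonneg ?_)
      apply intervalIntegral.integral_nonneg hu0
      intro v hv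
      have : (0:ℝ) ≤ v ^ ((p:ℝ) + β) := Real.rpow_nonneg hv.1 _
      have := hfact_pos hβ0 p
      positivity
    have hintval : (∫ v in (0:ℝ)..u, C * v ^ ((p:ℝ) + β) / hfact β p)
        = C * u ^ ((p:ℝ) + 1 + β) / hfact β (p+1) := by
      have : ∀ v : ℝ, C * v ^ ((p:ℝ) + β) / hfact β p = (C / hfact β p) * v ^ ((p:ℝ) + β) := by
        intro v; ring
      simp_rw [this]
      rw [intervalIntegral.integral_const_mul, integral_rpow (Or.inl (by linarith))]
      rw [Real.zero_rpow (by positivity), hfact_succ]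
      have := hfact_pos hβ0 p
      field_simp
      ring
    have hfinal : |F u| ≤ C * u ^ ((p:ℝ) + 1 + β) / hfact β (p+1) := by
      calc |F u| = |∫ v in (0:ℝ)..u, F' v| := by rw [← hFTC, hF0, sub_zero]
      _ ≤ _ := hintle.trans_eq hintval
    have : ((p:ℝ) + 1 + β) = (((p+1:ℕ)):ℝ) + β := by push_cast; ring
    rw [this] at hfinal
    exact hfinal

theorem stmt9 {n : ℕ} (p : ℕ) (hp : 1 ≤ p) (β L : ℝ)
    (hβ0 : 0 < β) (hβ1 : β ≤ 1) (hL : 0 ≤ L)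
    (f : EuclideanSpace ℝ (Fin n) → ℝ) (hf : ContDiff ℝ p f)
    (hHol : ∀ x y : EuclideanSpace ℝ (Fin n),
      ‖iteratedFDeriv ℝ p f x - iteratedFDeriv ℝ p f y‖ ≤ L * ‖x - y‖ ^ β)
    (x s : EuclideanSpace ℝ (Fin n)) (hs : s ≠ 0)
    (σ η₂ : ℝ) (hσ : 0 < σ) (hη0 : 0 < η₂) (hη1 : η₂ < 1)
    (hσbig : (L + 3) / (1 - η₂) ≤ σ)
    (ω : ℝ) (hω0 : 0 ≤ ω) (hω : ω ≤ 1 / σ)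
    (fbx fbxs ΔTbar : ℝ)
    (hΔ : σ / hfact β p * ‖s‖ ^ ((p : ℝ) + β) < ΔTbar)
    (hfx : |fbx - f x| ≤ ω * ΔTbar)
    (hfxs : |fbxs - f (x + s)| ≤ ω * ΔTbar)
    (hT : |ΔTbar - (f x - taylorP f p x s)| ≤ ω * ΔTbar) :
    |(fbx - fbxs) / ΔTbar - 1| ≤ 1 - η₂ ∧ η₂ ≤ (fbx - fbxs) / ΔTbar := by
  have hsnorm : (0:ℝ) < ‖s‖ := norm_pos_iff.mpr hs
  have hfp : (0:ℝ) < hfact β p := hfact_pos hβ0 p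
  have hspow : (0:ℝ) < ‖s‖ ^ ((p:ℝ) + β) := Real.rpow_pos_of_pos hsnorm _
  have hΔpos : (0:ℝ) < ΔTbar := lt_trans (by positivity) hΔ
  -- the 1-D restriction
  set g : ℝ → ℝ := fun u => f (x + u • s) with hgdef
  have hgc : ContDiff ℝ p g :=
    hf.comp (contDiff_const.add (contDiff_id.smul contDiff_const))
  set C : ℝ := L * ‖s‖ ^ ((p:ℝ) + β) with hCdef
  have hC : 0 ≤ C := by positivity
  have hsplit : ‖s‖ ^ ((p:ℝ) + β) = ‖s‖ ^ β * ‖s‖ ^ (p:ℕ) := by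
    rw [← Real.rpow_natCast ‖s‖ p, ← Real.rpow_add hsnorm]
    ring_nf
  have hHolg : ∀ t ∈ Set.Icc (0:ℝ) 1,
      |iteratedDeriv p g t - iteratedDeriv p g 0| ≤ C * t ^ β := by
    intro t ht
    have h1 := iteratedDeriv_line f p hf x s p le_rfl t
    have h2 := iteratedDeriv_line f p hf x s p le_rfl 0
    have hx0 : x + (0:ℝ) • s = x := by simp
    rw [hx0] at h2
    rw [h1, h2]
    have h3 : iteratedFDeriv ℝ p f (x + t • s) (fun _ => s) - iteratedFDeriv ℝ p f x (fun _ => s)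
        = (iteratedFDeriv ℝ p f (x + t • s) - iteratedFDeriv ℝ p f x) (fun _ => s) := by
      simp [ContinuousMultilinearMap.sub_apply]
    rw [h3, ← Real.norm_eq_abs]
    calc ‖(iteratedFDeriv ℝ p f (x + t • s) - iteratedFDeriv ℝ p f x) (fun _ => s)‖
        ≤ ‖iteratedFDeriv ℝ p f (x + t • s) - iteratedFDeriv ℝ p f x‖ * ∏ _i : Fin p, ‖s‖ :=
          ContinuousMultilinearMap.le_opNorm _ _
      _ ≤ (L * ‖x + t • s - x‖ ^ β) * ∏ _i : Fin p, ‖s‖ := by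
          apply mul_le_mul_of_nonneg_right (hHol _ _)
          positivity
      _ = C * t ^ β := by
          have hxts : x + t • s - x = t • s := by abel
          rw [hxts, Finset.prod_const, Finset.card_univ, Fintype.card_fin]
          rw [norm_smul, Real.norm_eq_abs, abs_of_nonneg ht.1,
            Real.mul_rpow ht.1 (norm_nonneg s), hCdef, hsplit]
          ring
  have hkey := key1d β hβ0 p g C hC hgc hHolg 1 ⟨zero_le_one, le_rfl⟩
  have hg1 : g 1 = f (x + s) := by simp [hgdef]
  have hsum : (∑ ℓ ∈ Finset.range (p+1), iteratedDeriv ℓ g 0 * (1:ℝ) ^ ℓ / (ℓ.factorial : ℝ))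
      = taylorP f p x s := by
    rw [taylorP]
    apply Finset.sum_congr rfl
    intro ℓ hℓ
    have hℓp : ℓ ≤ p := Nat.lt_succ_iff.mp (Finset.mem_range.mp hℓ)
    have := iteratedDeriv_line f p hf x s ℓ hℓp 0
    have hx0 : x + (0:ℝ) • s = x := by simp
    rw [hx0] at this
    rw [this]
    ring
  rw [hg1, hsum, Real.one_rpow, mul_one] at hkey
  -- hkey : |f (x + s) - taylorP f p x s| ≤ C / hfact β p
  have hRΔ : |f (x + s) - taylorP f p x s| ≤ L / σ * ΔTbar := by
    refine hkey.trans ?_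
    have heq : C / hfact β p = (L / σ) * (σ / hfact β p * ‖s‖ ^ ((p:ℝ) + β)) := by
      rw [hCdef]; field_simp
    rw [heq]
    exact mul_le_mul_of_nonneg_left hΔ.le (div_nonneg hL hσ.le)
  have hωΔ : ω * ΔTbar ≤ 1 / σ * ΔTbar := mul_le_mul_of_nonneg_right hω hΔpos.le
  have hnum : |fbx - fbxs - ΔTbar| ≤ (1 - η₂) * ΔTbar := by
    have hdecomp : fbx - fbxs - ΔTbar
        = (fbx - f x) - (fbxs - f (x + s)) - (ΔTbar - (f x - taylorP f p x s))
          - (f (x + s) - taylorP f p x s) := by ring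
    have hσ' : L + 3 ≤ σ * (1 - η₂) := by
      have h1η : (0:ℝ) < 1 - η₂ := by linarith
      calc L + 3 = (L + 3) / (1 - η₂) * (1 - η₂) := by field_simp
        _ ≤ σ * (1 - η₂) := mul_le_mul_of_nonneg_right hσbig h1η.le
    calc |fbx - fbxs - ΔTbar|
        ≤ |fbx - f x| + |fbxs - f (x + s)| + |ΔTbar - (f x - taylorP f p x s)|
          + |f (x + s) - taylorP f p x s| := by
          rw [hdecomp]
          have h1 := abs_sub ((fbx - f x) - (fbxs - f (x+s)) - (ΔTbar - (f x - taylorP f p x s)))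
            (f (x + s) - taylorP f p x s)
          have h2 := abs_sub ((fbx - f x) - (fbxs - f (x+s))) (ΔTbar - (f x - taylorP f p x s))
          have h3 := abs_sub (fbx - f x) (fbxs - f (x+s))
          linarith
      _ ≤ 1 / σ * ΔTbar + 1 / σ * ΔTbar + 1 / σ * ΔTbar + L / σ * ΔTbar := by
          exact add_le_add (add_le_add (add_le_add (hfx.trans hωΔ) (hfxs.trans hωΔ))
            (hT.trans hωΔ)) hRΔ
      _ = (L + 3) / σ * ΔTbar := by field_simp; ring
      _ ≤ (1 - η₂) * ΔTbar := by
          apply mul_le_mul_of_nonneg_right _ hΔpos.le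
          rw [div_le_iff₀ hσ]
          linarith
  have hratio : |(fbx - fbxs) / ΔTbar - 1| ≤ 1 - η₂ := by
    have hΔne : ΔTbar ≠ 0 := ne_of_gt hΔpos
    have h1 : (fbx - fbxs) / ΔTbar - 1 = (fbx - fbxs - ΔTbar) / ΔTbar := by
      field_simp
    rw [h1, abs_div, abs_of_pos hΔpos, div_le_iff₀ hΔpos]
    linarith [hnum]
  refine ⟨hratio, ?_⟩
  have := (abs_le.mp hratio).1
  linarith
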